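/- Let S be a left cancellative monoid and R an associative ring with an S-grading Γ whose support has d elements. Suppose R_e is nonzero and nil of bounded index s (a^s = 0 for all a ∈ R_e). Then for every g ∈ Supp(Γ), setting k_g = min{o(g), d} where o(g) is the order of g, one has (a_1 a_2 ⋯ a_{k_g})^s = 0 for all a_1, …, a_{k_g} ∈ R_g. -/

import Mathlib

/-- Product `a * l₀ * l₁ * ⋯` of a nonempty list of ring elements. -/
def mulList {R : Type*} [Mul R] (a : R) (l : List R) : R := l.foldl (· * ·) a

/-- `pw a n` is `aⁿ` for `n ≥ 1` (junk value `0` at `n = 0`). -/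
def pw {R : Type*} [Mul R] [Zero R] (a : R) : ℕ → R
  | 0 => 0
  | 1 => a
  | n + 2 => pw a (n + 1) * a

/-- Product of `n` elements given by `f` (junk `0` when `n = 0`). -/
def finProd {R : Type*} [Mul R] [Zero R] : {n : ℕ} → (Fin n → R) → R
  | 0, _ => 0
  | n + 1, f => mulList (f 0) (List.ofFn fun i : Fin n => f i.succ)

/-- `R ^ n = 0`: every product of `n` elements of `R` vanishes. -/
def PowZero (R : Type*) [Mul R] [Zero R] (n : ℕ) : Prop :=
  ∀ (a : R) (l : List R), l.length + 1 = n → mulList a l = 0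

/-- `T ^ n = 0` for a subset `T` of a ring. -/
def PowZeroOn {R : Type*} [Mul R] [Zero R] (T : Set R) (n : ℕ) : Prop :=
  ∀ (a : R) (l : List R), a ∈ T → (∀ x ∈ l, x ∈ T) → l.length + 1 = n → mulList a l = 0

/-- `a` is nilpotent: `aⁿ = 0` for some `n ≥ 1`. -/
def IsNilE {R : Type*} [Mul R] [Zero R] (a : R) : Prop := ∃ n, 1 ≤ n ∧ pw a n = 0

/-- A nil ring: every element is nilpotent. -/
def IsNilRing (R : Type*) [Mul R] [Zero R] : Prop := ∀ a : R, IsNilE a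

/-- An `S`-grading of the ring `R`: a direct sum decomposition into additive
subgroups with `R_g R_h ⊆ R_{gh}`. -/
structure IsGrading {S R : Type*} [Monoid S] [NonUnitalRing R] [DecidableEq S]
    (A : S → AddSubgroup R) : Prop where
  mul_mem : ∀ {g h : S} {x y : R}, x ∈ A g → y ∈ A h → x * y ∈ A (g * h)
  isInternal : DirectSum.IsInternal A

/-- Grading by an additively written monoid. -/
structure IsAddGrading {S R : Type*} [AddMonoid S] [NonUnitalRing R] [DecidableEq S]
    (A : S → AddSubgroup R) : Prop where
  mul_mem : ∀ {g h : S} {x y : R}, x ∈ A g → y ∈ A h → x * y ∈ A (g + h)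
  isInternal : DirectSum.IsInternal A

/-- The subset `T` of a ring is `f`-commutative: there are a semigroup `G` acting on it
from the left and a map `f` with `a*b = f(a,b)·(b*a)`. -/
def IsFCommutativeOn {R : Type*} [Mul R] (T : Set R) : Prop :=
  ∃ (G : Type) (_ : Semigroup G) (act : G → R → R),
    (∀ l m : G, ∀ x : R, x ∈ T → act (l * m) x = act l (act m x)) ∧
    (∀ l : G, ∀ x : R, x ∈ T → act l x ∈ T) ∧
    (∀ l : G, ∀ x y : R, x ∈ T → y ∈ T → act l (x * y) = act l x * y) ∧
    ∃ f : R → R → G, ∀ a b : R, a ∈ T → b ∈ T → a * b = act (f a b) (b * a)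

/-- The ring `R` is `f`-commutative. -/
def IsFCommutative (R : Type*) [Mul R] : Prop :=
  ∃ (G : Type) (_ : Semigroup G) (act : G → R → R),
    (∀ l m : G, ∀ x : R, act (l * m) x = act l (act m x)) ∧
    (∀ l : G, ∀ x y : R, act l (x * y) = act l x * y) ∧
    ∃ f : R → R → G, ∀ a b : R, a * b = act (f a b) (b * a)

/-- The order of `g`: least `n ≥ 1` with `gⁿ = 1`, and `0` if no such `n` exists. -/
noncomputable def ordOf {S : Type*} [Monoid S] (g : S) : ℕ := sInf {n | 1 ≤ n ∧ g ^ n = 1}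

lemma mulList_zero' {R : Type*} [NonUnitalRing R] (l : List R) : mulList (0 : R) l = 0 := by
  induction l with
  | nil => rfl
  | cons x l ih => simpa [mulList, zero_mul] using ih

lemma mulList_append' {R : Type*} [Mul R] (a : R) (l₁ l₂ : List R) :
    mulList a (l₁ ++ l₂) = mulList (mulList a l₁) l₂ := by
  simp [mulList, List.foldl_append]

lemma pw_zero' {R : Type*} [NonUnitalRing R] : ∀ n, 1 ≤ n → pw (0 : R) n = 0
  | 1, _ => rfl
  | n + 2, _ => by rw [pw, mul_zero]

lemma mulList_mem' {S R : Type*} [Monoid S] [NonUnitalRing R] [DecidableEq S]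
    {A : S → AddSubgroup R} (hA : IsGrading A) (g : S) :
    ∀ (l : List R) {h : S} {a : R}, a ∈ A h → (∀ x ∈ l, x ∈ A g) →
      mulList a l ∈ A (h * g ^ l.length)
  | [], h, a, ha, _ => by simpa [mulList] using ha
  | x :: l, h, a, ha, hl => by
      have hx : x ∈ A g := hl x List.mem_cons_self
      have := mulList_mem' hA g l (hA.mul_mem ha hx)
        (fun y hy => hl y (List.mem_cons_of_mem _ hy))
      have heq : h * g * g ^ l.length = h * g ^ (x :: l).length := by
        rw [List.length_cons, pow_succ', mul_assoc]
      rw [heq] at this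
      simpa [mulList] using this

lemma finProd_mem' {S R : Type*} [Monoid S] [NonUnitalRing R] [DecidableEq S]
    {A : S → AddSubgroup R} (hA : IsGrading A) (g : S) {k : ℕ} (hk : 1 ≤ k)
    (a : Fin k → R) (ha : ∀ i, a i ∈ A g) : finProd a ∈ A (g ^ k) := by
  match k, hk with
  | 0, hk => exact absurd hk (by omega)
  | n + 1, _ =>
    have := mulList_mem' hA g (List.ofFn fun i : Fin n => a i.succ) (ha 0)
      (by intro x hx; rw [List.mem_ofFn] at hx; obtain ⟨i, rfl⟩ := hx; exact ha _)
    simpa [finProd, pow_succ'] using this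

lemma finProd_eq_zero' {S R : Type*} [Monoid S] [NonUnitalRing R] [DecidableEq S]
    {A : S → AddSubgroup R} (hA : IsGrading A) (g : S) {k : ℕ}
    (a : Fin k → R) (ha : ∀ i, a i ∈ A g) (i : ℕ) (hi1 : 1 ≤ i) (hik : i ≤ k)
    (hbot : A (g ^ i) = ⊥) : finProd a = 0 := by
  match k, hik with
  | 0, hik => exact absurd (le_trans hi1 hik) (by omega)
  | n + 1, hik =>
    set l : List R := List.ofFn fun j : Fin n => a j.succ with hl
    have hlen : l.length = n := by simp [hl]
    have hmem : ∀ x ∈ l, x ∈ A g := by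
      intro x hx; rw [hl, List.mem_ofFn] at hx; obtain ⟨j, rfl⟩ := hx; exact ha _
    have htake : mulList (a 0) (l.take (i - 1)) ∈ A (g ^ i) := by
      have := mulList_mem' hA g (l.take (i - 1)) (ha 0)
        (fun x hx => hmem x (List.mem_of_mem_take hx))
      have hlen2 : (l.take (i - 1)).length = i - 1 := by
        rw [List.length_take, hlen]; omega
      have hpow : g * g ^ (i - 1) = g ^ i := by
        rw [← pow_succ']; congr 1; omega
      rw [hlen2, hpow] at this
      exact this
    rw [hbot, AddSubgroup.mem_bot] at htake
    have : finProd a = mulList (a 0) l := rfl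
    rw [this, ← List.take_append_drop (i - 1) l, mulList_append', htake, mulList_zero']

theorem stmt_2 {S R : Type*} [Monoid S] [IsLeftCancelMul S] [DecidableEq S]
    [NonUnitalRing R] (A : S → AddSubgroup R) (hA : IsGrading A)
    (d s : ℕ) (hfin : {g : S | A g ≠ ⊥}.Finite) (hcard : hfin.toFinset.card = d)
    (hs : 1 ≤ s) (hne : A 1 ≠ ⊥) (hnil : ∀ a ∈ A 1, pw a s = 0)
    (g : S) (hg : A g ≠ ⊥) :
    ∀ a : Fin (if ordOf g = 0 then d else min (ordOf g) d) → R,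
      (∀ i, a i ∈ A g) → pw (finProd a) s = 0 := by
  classical
  intro a ha
  have hgT : g ∈ hfin.toFinset := by simpa using hg
  have hd1 : 1 ≤ d := by
    have := Finset.card_pos.mpr ⟨g, hgT⟩
    omega
  by_cases hcase : ordOf g ≠ 0 ∧ ordOf g ≤ d
  · obtain ⟨h0, hle⟩ := hcase
    have hKval : (if ordOf g = 0 then d else min (ordOf g) d) = ordOf g := by
      rw [if_neg h0]; omega
    have hne' : {n | 1 ≤ n ∧ g ^ n = 1}.Nonempty := by
      by_contra h
      rw [Set.not_nonempty_iff_eq_empty] at h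
      apply h0
      rw [ordOf, h, Nat.sInf_empty]
    have hord1 : 1 ≤ ordOf g := (Nat.sInf_mem hne').1
    have hord2 : g ^ ordOf g = 1 := (Nat.sInf_mem hne').2
    have hprod : finProd a ∈ A (g ^ (if ordOf g = 0 then d else min (ordOf g) d)) :=
      finProd_mem' hA g (by rw [hKval]; exact hord1) a ha
    rw [show g ^ (if ordOf g = 0 then d else min (ordOf g) d) = 1 from by
      rw [hKval, hord2]] at hprod
    exact hnil _ hprod
  · have hB : ∀ n, 1 ≤ n → n ≤ d → g ^ n ≠ 1 := by
      intro n h1 hnd hgn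
      have hmem : n ∈ {m | 1 ≤ m ∧ g ^ m = 1} := ⟨h1, hgn⟩
      have hle : ordOf g ≤ n := Nat.sInf_le hmem
      have hpos : 1 ≤ ordOf g := (Nat.sInf_mem ⟨n, hmem⟩).1
      exact hcase ⟨by omega, by omega⟩
    have cancel : ∀ i j : ℕ, i < j → j ≤ d → g ^ i = g ^ j → False := by
      intro i j hij hjd hgij
      have h1 : g ^ i * g ^ (j - i) = g ^ i * 1 := by
        rw [mul_one, ← pow_add, show i + (j - i) = j from by omega, ← hgij]
      have h2 : g ^ (j - i) = 1 := mul_left_cancel h1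
      exact hB (j - i) (by omega) (by omega) h2
    have hbot : ∃ i, 1 ≤ i ∧ i ≤ d ∧ A (g ^ i) = ⊥ := by
      by_contra hcon
      push_neg at hcon
      have hsub : ∀ i ∈ Finset.range (d + 1), g ^ i ∈ hfin.toFinset := by
        intro i hi
        rw [Finset.mem_range] at hi
        rw [Set.Finite.mem_toFinset, Set.mem_setOf_eq]
        rcases Nat.eq_zero_or_pos i with h | h
        · simpa [h] using hne
        · exact hcon i h (by omega)
      have hinj : Set.InjOn (fun i => g ^ i) (Finset.range (d + 1)) := by
        intro i hi j hj hij
        simp only [Finset.coe_range, Set.mem_Iio] at hi hj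
        rcases Nat.lt_trichotomy i j with h | h | h
        · exact (cancel i j h (by omega) hij).elim
        · exact h
        · exact (cancel j i h (by omega) hij.symm).elim
      have := Finset.card_le_card_of_injOn (fun i => g ^ i) hsub hinj
      rw [Finset.card_range, hcard] at this
      omega
    obtain ⟨i, hi1, hid, hAbot⟩ := hbot
    have hKd : (if ordOf g = 0 then d else min (ordOf g) d) = d := by
      rcases Decidable.em (ordOf g = 0) with h | h
      · rw [if_pos h]
      · rw [if_neg h]
        have : ¬ ordOf g ≤ d := fun hh => hcase ⟨h, hh⟩
        omega
    have hz : finProd a = 0 :=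
      finProd_eq_zero' hA g a ha i hi1 (by omega) hAbot
    rw [hz]
    exact pw_zero' s hs
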